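/- Let n ≥ 3 and X ⊆ {2,…,n−1}. If S is a Hamilton sequence for the restricted rotator graph RR_{n−1}(X), then reuse_n(S) is a Hamilton sequence for the restricted rotator graph RR_n(R), where R = {n} ∪ {n−x+1 : x ∈ X}. -/

import Mathlib

open Equiv

/-- The prefix-rotation `σ_r = (1 2 ⋯ r)` of positions, 0-indexed as a
permutation of `Fin n` (it sends position `i` to `i+1` for `i < r-1`,
sends position `r-1` to `0`, and fixes all positions `≥ r`). -/
def sigmaRot (n r : ℕ) : Equiv.Perm (Fin n) :=
  if h : r - 1 < n then Fin.cycleRange ⟨r - 1, h⟩ else 1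

/-- The permutation `σ_{r₁}σ_{r₂}⋯σ_{r_i}` (composed left-to-right) given by the
first `i` entries of the sequence `S`. -/
def partialProd (n : ℕ) (S : List ℕ) (i : ℕ) : Equiv.Perm (Fin n) :=
  ((S.take i).map (sigmaRot n)).prod

/-- `S` is a Hamilton sequence for the restricted rotator graph `RR_n(R)`. -/
def IsHamiltonSeq (n : ℕ) (R : Set ℕ) (S : List ℕ) : Prop :=
  S.length = Nat.factorial n ∧
  (∀ r ∈ S, r ∈ R) ∧
  (∀ i < Nat.factorial n, ∀ j < Nat.factorial n,
      partialProd n S i = partialProd n S j → i = j) ∧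
  partialProd n S S.length = 1

/-- The value (0-indexed symbol) at the last position of the string `a`;
the one-line-notation symbol there is `lastVal a + 1`. -/
def lastVal {n : ℕ} (a : Equiv.Perm (Fin n)) : ℕ :=
  if h : 0 < n then ((a ⟨n - 1, Nat.sub_lt h Nat.one_pos⟩ : Fin n) : ℕ) else 0

/-- Arc relation of the restricted incomplete rotator graph `RIR_n(R,m)`:
both endpoints have last symbol `≤ m` and `b = a·σ_r` for some `r ∈ R`. -/
def RIRAdj (n m : ℕ) (R : Set ℕ) (a b : Equiv.Perm (Fin n)) : Prop :=
  lastVal a < m ∧ lastVal b < m ∧ ∃ r ∈ R, b = a * sigmaRot n r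

/-- `RIR_n(R,m)` is strongly connected. -/
def StronglyConnectedRIR (n m : ℕ) (R : Set ℕ) : Prop :=
  ∀ a b : Equiv.Perm (Fin n), lastVal a < m → lastVal b < m →
    Relation.ReflTransGen (RIRAdj n m R) a b

/-- The reuse operation: replace each entry `r` by `n,…,n,n+1-r` (`n-1` copies of `n`). -/
def reuseOp (n : ℕ) (S : List ℕ) : List ℕ :=
  (S.map (fun r => List.replicate (n - 1) n ++ [n + 1 - r])).flatten

/-- Corbett's reuse sequences: `C₁ = (1)` and `C_k = reuse_k(C_{k-1})`. -/
def corbettC : ℕ → List ℕ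
  | 0 => []
  | 1 => [1]
  | k + 2 => reuseOp (k + 2) (corbettC (k + 1))

/-- The recycle operation: replace each entry `r` by
`n, n, n-1, …, n-1, n, …, n` (`r-1` copies of `n-1`, then `n-r-1` copies of `n`). -/
def recycleOp (n : ℕ) (S : List ℕ) : List ℕ :=
  (S.map (fun r => n :: n :: (List.replicate (r - 1) (n - 1) ++ List.replicate (n - r - 1) n))).flatten

/-- The canonical recycle sequences: `D₁ = (1)` and `D_k = recycle_k(D_{k-1})`. -/
def recycleD : ℕ → List ℕ
  | 0 => []
  | 1 => [1]
  | k + 2 => recycleOp (k + 2) (recycleD (k + 1))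

/-- The rewind operation `rewind_m(S)` (with `S = T, n-1, n-1`):
`(T,n-1,n)`, then `m-2` copies of `(T,n)`, then `(T,n-1,n)`, then `m-2` copies of `n`. -/
def rewindOp (n m : ℕ) (S : List ℕ) : List ℕ :=
  (S.dropLast.dropLast ++ [n - 1, n])
    ++ (List.replicate (m - 2) (S.dropLast.dropLast ++ [n])).flatten
    ++ (S.dropLast.dropLast ++ [n - 1, n])
    ++ List.replicate (m - 2) n

/-- The canonical rewind sequences: `W₂ = (2,2)` and `W_k = rewind_k(W_{k-1})`. -/
def rewindW : ℕ → List ℕ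
  | 0 => []
  | 1 => []
  | 2 => [2, 2]
  | k + 3 => rewindOp (k + 3) (k + 3) (rewindW (k + 2))

/-- `S` is a Hamilton sequence for the restricted incomplete rotator graph `RIR_n(R,m)`,
starting from the string `n n-1 ⋯ 1` (which is `Fin.revPerm`). -/
def IsHamiltonSeqRIR (n m : ℕ) (R : Set ℕ) (S : List ℕ) : Prop :=
  S.length = m * Nat.factorial (n - 1) ∧
  (∀ r ∈ S, r ∈ R) ∧
  (∀ i < S.length, ∀ j < S.length,
      Fin.revPerm * partialProd n S i = Fin.revPerm * partialProd n S j → i = j) ∧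
  {b : Equiv.Perm (Fin n) | ∃ i < S.length, b = Fin.revPerm * partialProd n S i}
    = {b : Equiv.Perm (Fin n) | lastVal b < m} ∧
  Fin.revPerm * partialProd n S S.length = Fin.revPerm

/-- The cyclic shift `shift²` moving the first two entries to the end. -/
def shift2 (S : List ℕ) : List ℕ := S.drop 2 ++ S.take 2

-- embedding Φ
def Phi (m : ℕ) (π : Perm (Fin m)) : Perm (Fin (m+1)) :=
  Equiv.Perm.decomposeFin.symm (0, Fin.revPerm * π * Fin.revPerm)

lemma Phi_zero (m : ℕ) (π : Perm (Fin m)) : Phi m π 0 = 0 :=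
  Equiv.Perm.decomposeFin_symm_apply_zero _ _

lemma Phi_succ (m : ℕ) (π : Perm (Fin m)) (j : Fin m) :
    Phi m π j.succ = ((π j.rev).rev).succ := by
  simp [Phi, Equiv.Perm.decomposeFin_symm_apply_succ, Equiv.swap_self]

lemma Phi_mul (m : ℕ) (π ρ : Perm (Fin m)) : Phi m (π * ρ) = Phi m π * Phi m ρ := by
  ext x
  induction x using Fin.cases with
  | zero => simp [Phi_zero, Perm.mul_apply]
  | succ j => simp [Phi_succ, Perm.mul_apply, Fin.rev_rev]

lemma Phi_one (m : ℕ) : Phi m 1 = 1 := by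
  ext x
  induction x using Fin.cases with
  | zero => simp [Phi_zero]
  | succ j => simp [Phi_succ, Fin.rev_rev]

lemma Phi_inj (m : ℕ) {π ρ : Perm (Fin m)} (h : Phi m π = Phi m ρ) : π = ρ := by
  ext j
  have := DFunLike.congr_fun h (j.rev).succ
  rw [Phi_succ, Phi_succ, Fin.rev_rev] at this
  have h2 := Fin.succ_injective _ this
  exact congrArg Fin.val (Fin.rev_injective h2)

lemma cycleRange_val {N : ℕ} (i j : Fin (N+1)) :
    (Fin.cycleRange i j).val =
      if j.val < i.val then j.val + 1 else if j.val = i.val then 0 else j.val := by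
  rcases lt_trichotomy j i with h | h | h
  · rw [Fin.cycleRange_of_lt h, if_pos (Fin.lt_def.mp h)]
    exact Fin.val_add_one_of_lt (lt_of_lt_of_le h (Fin.le_last i))
  · rw [Fin.cycleRange_of_eq h, if_neg (by simp [h]), if_pos (by simp [h])]
    rfl
  · rw [Fin.cycleRange_of_gt h, if_neg (by omega), if_neg (by omega)]

lemma sigmaRot_eq (n r : ℕ) (h : r - 1 < n) : sigmaRot n r = Fin.cycleRange ⟨r - 1, h⟩ := by
  rw [sigmaRot, dif_pos h]

lemma sigmaRot_top (m : ℕ) : sigmaRot (m+1) (m+1) = finRotate (m+1) := by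
  rw [sigmaRot_eq (m+1) (m+1) (by omega)]
  have h : (⟨m+1-1, by omega⟩ : Fin (m+1)) = Fin.last m := by
    apply Fin.ext; simp
  rw [h, Fin.cycleRange_last]

lemma cpow_val (m k : ℕ) (x : Fin (m+1)) :
    (((sigmaRot (m+1) (m+1)) ^ k) x).val = (x.val + k) % (m+1) := by
  induction k generalizing x with
  | zero => simp [Nat.mod_eq_of_lt x.isLt]
  | succ k ih =>
      rw [pow_succ, Perm.mul_apply,
        show sigmaRot (m+1) (m+1) x = x + 1 by rw [sigmaRot_top, finRotate_succ_apply],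
        ih (x + 1)]
      rw [Fin.val_add_one]
      split_ifs with h
      · have hx : x.val = m := by rw [h]; rfl
        conv_rhs => rw [show x.val + (k+1) = k + (m+1) by omega]
        rw [Nat.add_mod_right]
        simp
      · congr 1
        omega

lemma mod_helper (M y : ℕ) (hy : y ≤ M + 1) :
    (y + (M+1)) % (M+2) = if y = 0 then M+1 else y - 1 := by
  split_ifs with h
  · subst h; rw [Nat.zero_add]; exact Nat.mod_eq_of_lt (by omega)
  · rw [show y + (M+1) = (y-1) + (M+2) by omega, Nat.add_mod_right]
    exact Nat.mod_eq_of_lt (by omega)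

lemma block_eq (M r : ℕ) (hr2 : 2 ≤ r) (hrm : r ≤ M + 1) :
    sigmaRot (M+2) (M+2) ^ (M+1) * sigmaRot (M+2) (M+3-r)
      = Phi (M+1) (sigmaRot (M+1) r) := by
  have h1 : (M+3-r) - 1 < M + 2 := by omega
  have h2 : r - 1 < M + 1 := by omega
  rw [sigmaRot_eq _ _ h1, sigmaRot_eq _ _ h2]
  ext x
  induction x using Fin.cases with
  | zero =>
      rw [Perm.mul_apply, cpow_val,
        mod_helper M ((Fin.cycleRange ⟨M+3-r-1, h1⟩ (0 : Fin (M+2))).val) (Fin.is_le _),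
        Phi_zero]
      simp only [cycleRange_val, Fin.val_zero, Fin.val_mk]
      simp [show 0 < M+3-r-1 by omega]
  | succ j =>
      have hj := j.isLt
      rw [Perm.mul_apply, cpow_val,
        mod_helper M ((Fin.cycleRange ⟨M+3-r-1, h1⟩ j.succ).val) (Fin.is_le _),
        Phi_succ]
      simp only [cycleRange_val, Fin.val_succ, Fin.val_rev, Fin.val_mk]
      split_ifs <;> first | exact ‹False›.elim | omega

lemma pp_zero (n : ℕ) (T : List ℕ) : partialProd n T 0 = 1 := by simp [partialProd]

lemma pp_cons_succ (n : ℕ) (r : ℕ) (S : List ℕ) (i : ℕ) :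
    partialProd n (r :: S) (i+1) = sigmaRot n r * partialProd n S i := by
  simp [partialProd, List.take_succ_cons]

lemma reuse_nil (n : ℕ) : reuseOp n [] = [] := by simp [reuseOp]

lemma reuse_cons (n r : ℕ) (S : List ℕ) :
    reuseOp n (r :: S) = (List.replicate (n-1) n ++ [n+1-r]) ++ reuseOp n S := by
  simp [reuseOp]

lemma reuse_length (M : ℕ) (S : List ℕ) :
    (reuseOp (M+2) S).length = (M+2) * S.length := by
  induction S with
  | nil => simp [reuse_nil]
  | cons r S ih =>
      rw [reuse_cons, List.length_append, List.length_append, ih]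
      simp only [List.length_replicate, List.length_singleton, List.length_cons, List.length_nil, Nat.mul_succ]
      omega

lemma key (M : ℕ) (X : Set ℕ) (hX : ∀ r ∈ X, 2 ≤ r ∧ r ≤ M+1) (S : List ℕ)
    (hmem : ∀ r ∈ S, r ∈ X) :
    ∀ j, j ≤ (M+2) * S.length →
      partialProd (M+2) (reuseOp (M+2) S) j
        = Phi (M+1) (partialProd (M+1) S (j / (M+2)))
            * (sigmaRot (M+2) (M+2)) ^ (j % (M+2)) := by
  induction S with
  | nil =>
      intro j hj
      have : j = 0 := by simpa using hj
      subst this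
      simp [pp_zero, Phi_one, reuse_nil]
  | cons r S ih =>
      intro j hj
      rw [reuse_cons]
      by_cases hsmall : j < M + 2
      · have h₁ : ((List.replicate ((M+2)-1) (M+2) ++ [(M+2)+1-r]) ++ reuseOp (M+2) S).take j
            = List.replicate j (M+2) := by
          rw [List.take_append, List.take_append,
            List.take_replicate]
          simp only [List.length_append, List.length_replicate, List.length_singleton]
          rw [show j - ((M+2)-1) = 0 by omega, show j - ((M+2)-1+1) = 0 by omega,
            show min j ((M+2)-1) = j by omega]
          simp
        rw [partialProd, h₁, List.map_replicate, List.prod_replicate,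
          Nat.div_eq_of_lt hsmall, Nat.mod_eq_of_lt hsmall, pp_zero, Phi_one, one_mul]
      · push_neg at hsmall
        set j' := j - (M+2) with hj'
        have hjj : j = j' + (M+2) := by omega
        have hj'le : j' ≤ (M+2) * S.length := by
          rw [List.length_cons, Nat.mul_succ] at hj; omega
        have h₁ : ((List.replicate ((M+2)-1) (M+2) ++ [(M+2)+1-r]) ++ reuseOp (M+2) S).take j
            = (List.replicate ((M+2)-1) (M+2) ++ [(M+2)+1-r]) ++ (reuseOp (M+2) S).take j' := by
          rw [List.take_append]
          congr 1
          · apply List.take_of_length_le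
            simp only [List.length_append, List.length_replicate, List.length_singleton]
            omega
          · congr 1
            simp only [List.length_append, List.length_replicate, List.length_singleton]
            omega
        have hr : r ∈ X := hmem r List.mem_cons_self
        obtain ⟨hr2, hrm⟩ := hX r hr
        have hblock : ((List.replicate ((M+2)-1) (M+2) ++ [(M+2)+1-r]).map (sigmaRot (M+2))).prod
            = Phi (M+1) (sigmaRot (M+1) r) := by
          rw [List.map_append, List.prod_append, List.map_replicate, List.prod_replicate,
            List.map_singleton, List.prod_singleton]
          rw [show (M+2)-1 = M+1 from rfl, show (M+2)+1-r = M+3-r from rfl]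
          exact block_eq M r hr2 hrm
        rw [partialProd, h₁, List.map_append, List.prod_append, hblock]
        have ihj := ih (fun x hx => hmem x (List.mem_cons_of_mem r hx)) j' hj'le
        rw [partialProd] at ihj
        rw [ihj]
        rw [hjj, Nat.add_div_right _ (by omega : 0 < M+2), Nat.add_mod_right]
        rw [pp_cons_succ, Phi_mul]
        group

lemma cancel_le (M k l : ℕ) (hkl : k ≤ l) (hl : l ≤ M+1) (π ρ : Perm (Fin (M+1)))
    (h : Phi (M+1) π * (sigmaRot (M+2) (M+2)) ^ k = Phi (M+1) ρ * (sigmaRot (M+2) (M+2)) ^ l) :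
    k = l ∧ π = ρ := by
  set c := sigmaRot (M+2) (M+2)
  have hdec : c ^ l = c ^ (l - k) * c ^ k := by
    rw [← pow_add]
    congr 1
    omega
  rw [hdec, ← mul_assoc] at h
  have h2 : Phi (M+1) π = Phi (M+1) ρ * c ^ (l - k) := mul_right_cancel h
  have h3 := DFunLike.congr_fun h2 0
  rw [Phi_zero, Perm.mul_apply] at h3
  have h4 : (c ^ (l - k)) (0 : Fin (M+2)) = 0 := by
    have h0 : Phi (M+1) ρ ((c ^ (l - k)) 0) = Phi (M+1) ρ 0 := by
      rw [Phi_zero, ← h3]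
    exact (Phi (M+1) ρ).injective h0
  have h5 := cpow_val (M+1) (l - k) (0 : Fin (M+2))
  rw [h4] at h5
  simp at h5
  have h7 : (l - k) % (M+1+1) = l - k := Nat.mod_eq_of_lt (by omega)
  have h6 : l - k = 0 := by omega
  have hk : k = l := by omega
  subst hk
  refine ⟨rfl, ?_⟩
  apply Phi_inj
  rw [h6] at h2
  simpa using h2

lemma cancel (M k l : ℕ) (hk : k ≤ M+1) (hl : l ≤ M+1) (π ρ : Perm (Fin (M+1)))
    (h : Phi (M+1) π * (sigmaRot (M+2) (M+2)) ^ k = Phi (M+1) ρ * (sigmaRot (M+2) (M+2)) ^ l) :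
    k = l ∧ π = ρ := by
  rcases le_total k l with hkl | hkl
  · exact cancel_le M k l hkl hl π ρ h
  · obtain ⟨h1, h2⟩ := cancel_le M l k hkl hk ρ π h.symm
    exact ⟨h1.symm, h2.symm⟩

/-- For `n ≥ 3` and `X ⊆ {2,…,n-1}`: if `S` is a Hamilton sequence for
`RR_{n-1}(X)`, then `reuse_n(S)` is a Hamilton sequence for `RR_n(R)` with
`R = {n} ∪ {n-x+1 : x ∈ X}`. -/
theorem stmt7 (n : ℕ) (hn : 3 ≤ n) (X : Set ℕ) (hX : X ⊆ {r | 2 ≤ r ∧ r ≤ n - 1})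
    (S : List ℕ) (hS : IsHamiltonSeq (n - 1) X S) :
    IsHamiltonSeq n ({n} ∪ {r | ∃ x ∈ X, r = n - x + 1}) (reuseOp n S) := by
  obtain ⟨M, rfl⟩ : ∃ M, n = M + 2 := ⟨n - 2, by omega⟩
  rw [show M + 2 - 1 = M + 1 from rfl] at hS hX
  obtain ⟨hlen, hmemS, hinj, hfin⟩ := hS
  have hX' : ∀ r ∈ X, 2 ≤ r ∧ r ≤ M + 1 := fun r hr => hX hr
  have hfact : Nat.factorial (M+2) = (M+2) * Nat.factorial (M+1) := Nat.factorial_succ (M+1)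
  have hlen' : (reuseOp (M+2) S).length = Nat.factorial (M+2) := by
    rw [reuse_length, hlen, hfact]
  refine ⟨hlen', ?_, ?_, ?_⟩
  · intro r' hr'
    rw [reuseOp, List.mem_flatten] at hr'
    obtain ⟨B, hB, hr'B⟩ := hr'
    rw [List.mem_map] at hB
    obtain ⟨r, hrS, rfl⟩ := hB
    rcases List.mem_append.mp hr'B with h | h
    · exact Or.inl (List.eq_of_mem_replicate h)
    · have heq : r' = (M+2) + 1 - r := by simpa using h
      obtain ⟨h2, hm⟩ := hX' r (hmemS r hrS)
      exact Or.inr ⟨r, hmemS r hrS, by omega⟩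
  · intro i hi j hj heq
    have hiB : i ≤ (M+2) * S.length := by rw [hlen, ← hfact]; omega
    have hjB : j ≤ (M+2) * S.length := by rw [hlen, ← hfact]; omega
    rw [key M X hX' S hmemS i hiB, key M X hX' S hmemS j hjB] at heq
    obtain ⟨hmod, hppeq⟩ := cancel M (i % (M+2)) (j % (M+2))
      (by have := Nat.mod_lt i (show 0 < M+2 by omega); omega)
      (by have := Nat.mod_lt j (show 0 < M+2 by omega); omega)
      _ _ heq
    have hdivi : i / (M+2) < Nat.factorial (M+1) := by
      rw [Nat.div_lt_iff_lt_mul (show 0 < M+2 by omega), Nat.mul_comm]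
      rwa [hfact] at hi
    have hdivj : j / (M+2) < Nat.factorial (M+1) := by
      rw [Nat.div_lt_iff_lt_mul (show 0 < M+2 by omega), Nat.mul_comm]
      rwa [hfact] at hj
    have hdiv : i / (M+2) = j / (M+2) := hinj _ hdivi _ hdivj hppeq
    calc i = (M+2) * (i / (M+2)) + i % (M+2) := (Nat.div_add_mod i (M+2)).symm
      _ = (M+2) * (j / (M+2)) + j % (M+2) := by rw [hdiv, hmod]
      _ = j := Nat.div_add_mod j (M+2)
  · rw [hlen', hfact]
    have hb : (M+2) * Nat.factorial (M+1) ≤ (M+2) * S.length := by rw [hlen]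
    rw [key M X hX' S hmemS _ hb]
    rw [Nat.mul_div_cancel_left _ (show 0 < M+2 by omega), Nat.mul_mod_right]
    rw [← hlen, hfin, Phi_one, pow_zero, one_mul]
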